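/- For grooming factor C = 2, any valid solution satisfies 4A ≥ 6W + N(N−1), where A is the total number of vertices (ADMs) and W the number of parts. Consequently, A(2,N) ≥ ⌈(11N² − 8N − 3)/32⌉. -/

import Mathlib

/-- The load induced on the arc of the directed cycle `C⃗_p` going from `t` to `t+1`
by a set `S` of requests, each request `(i,j)` being routed clockwise from `i` to `j`. -/
def cload (p : ℕ) (S : Finset (ZMod p × ZMod p)) (t : ZMod p) : ℕ :=
  (S.filter fun a => (t - a.1).val < (a.2 - a.1).val).card

/-- The set of vertices (endpoints of arcs) of a digraph given by its arc set. -/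
def verts (p : ℕ) (S : Finset (ZMod p × ZMod p)) : Finset (ZMod p) :=
  S.image Prod.fst ∪ S.image Prod.snd

open Finset
set_option linter.unusedSectionVars false


lemma fsum (k : ℕ) : ∑ ℓ ∈ Finset.range (k+2), min ℓ (k+2-ℓ)
    = (∑ ℓ ∈ Finset.range k, min ℓ (k-ℓ)) + (k+1) := by
  rw [Finset.sum_range_succ' (fun ℓ => min ℓ (k+2-ℓ)) (k+1)]
  have h1 : ∑ i ∈ Finset.range (k+1), min (i+1) (k+2-(i+1))
      = ∑ i ∈ Finset.range (k+1), (min i (k-i) + 1) := by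
    apply Finset.sum_congr rfl
    intro i hi
    have := Finset.mem_range.mp hi
    omega
  rw [h1, Finset.sum_add_distrib, Finset.sum_range_succ]
  simp

lemma fbound : ∀ n : ℕ, n^2 ≤ 4 * (∑ ℓ ∈ Finset.range n, min ℓ (n-ℓ)) + 1 := by
  intro n
  induction n using Nat.strong_induction_on with
  | _ n ih =>
    match n with
    | 0 => simp
    | 1 => simp
    | (k+2) =>
      have := ih k (by omega)
      rw [fsum]
      ring_nf
      ring_nf at this
      omega


lemma finset_pair_eq {α : Type*} [DecidableEq α] {a b c d : α}
    (h : ({a, b} : Finset α) = {c, d}) : (a = c ∧ b = d) ∨ (a = d ∧ b = c) := by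
  have h' : ({a, b} : Set α) = {c, d} := by
    have := congrArg (fun s : Finset α => (s : Set α)) h
    simpa using this
  exact Set.pair_eq_pair_iff.mp h'

section
variable {N : ℕ} [NeZero N]

lemma mem_verts_of_mem {S : Finset (ZMod N × ZMod N)} {a : ZMod N × ZMod N} (ha : a ∈ S) :
    a.1 ∈ verts N S ∧ a.2 ∈ verts N S :=
  ⟨Finset.mem_union_left _ (Finset.mem_image_of_mem _ ha),
   Finset.mem_union_right _ (Finset.mem_image_of_mem _ ha)⟩

lemma val_sub_of_le {M a b : ℕ} (hab : a ≤ b) (hb : b < M) :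
    ((b:ZMod M) - (a:ZMod M)).val = b - a := by
  have h : ((b:ZMod M) - (a:ZMod M)) = ((b - a : ℕ) : ZMod M) := by
    push_cast [Nat.cast_sub hab]; ring
  rw [h, ZMod.val_cast_of_lt (by omega)]

lemma val_sub_of_gt {M a b : ℕ} (hab : b < a) (ha : a < M) :
    ((b:ZMod M) - (a:ZMod M)).val = M - a + b := by
  haveI : NeZero M := ⟨by omega⟩
  have h1 : ((b:ZMod M) - (a:ZMod M)) = -(((a - b : ℕ)) : ZMod M) := by
    push_cast [Nat.cast_sub hab.le]; ring
  have h2 : (((a - b : ℕ)) : ZMod M) ≠ 0 := by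
    rw [Ne, ZMod.natCast_eq_zero_iff]
    intro h
    have := Nat.le_of_dvd (by omega) h
    omega
  haveI : NeZero (((a - b : ℕ)) : ZMod M) := ⟨h2⟩
  rw [h1, ZMod.val_neg_of_ne_zero, ZMod.val_cast_of_lt (by omega)]
  omega

end

lemma length_eq_four {α : Type*} {l : List α} : l.length = 4 ↔ ∃ a b c d, l = [a, b, c, d] :=
  ⟨fun _ => let [a, b, c, d] := l; ⟨a, b, c, d, rfl⟩, fun ⟨_, _, _, _, e⟩ => e ▸ rfl⟩

section
variable {N : ℕ} [NeZero N]


lemma val_add_neg_val {x : ZMod N} (hx : x ≠ 0) : x.val + (-x).val = N := by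
  haveI : NeZero x := ⟨hx⟩
  rw [ZMod.val_neg_of_ne_zero]
  have h1 : x.val < N := ZMod.val_lt x
  have h2 : x.val ≠ 0 := by simpa [ZMod.val_eq_zero] using hx
  omega

lemma sum_val_fun {M : Type*} [AddCommMonoid M] (g : ℕ → M) :
    ∑ d : ZMod N, g d.val = ∑ ℓ ∈ Finset.range N, g ℓ :=
  Finset.sum_nbij' (fun d => d.val) (fun ℓ => (ℓ : ZMod N))
    (fun d _ => Finset.mem_range.mpr (ZMod.val_lt d))
    (fun ℓ _ => Finset.mem_univ _)
    (fun d _ => by simp [ZMod.natCast_val, ZMod.cast_id])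
    (fun ℓ hℓ => ZMod.val_cast_of_lt (Finset.mem_range.mp hℓ))
    (fun d _ => rfl)

lemma card_val_lt {ℓ : ℕ} (hℓ : ℓ ≤ N) :
    (Finset.univ.filter fun s : ZMod N => s.val < ℓ).card = ℓ := by
  have : (Finset.univ.filter fun s : ZMod N => s.val < ℓ).card = (Finset.range ℓ).card := by
    refine Finset.card_nbij' (fun s => s.val) (fun m => (m : ZMod N)) ?_ ?_ ?_ ?_
    · intro s hs; simp only [Finset.mem_coe, Finset.mem_filter] at hs; exact Finset.mem_range.mpr hs.2
    · intro m hm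
      simp only [Finset.mem_coe, Finset.mem_filter, Finset.mem_univ, true_and]
      rw [ZMod.val_cast_of_lt (by have := Finset.mem_range.mp hm; omega : m < N)]
      exact Finset.mem_range.mp hm
    · intro s _; simp [ZMod.natCast_val, ZMod.cast_id]
    · intro m hm; exact ZMod.val_cast_of_lt (by have := Finset.mem_range.mp hm; omega)
  rw [this, Finset.card_range]

lemma card_shift_lt (i : ZMod N) {ℓ : ℕ} (hℓ : ℓ ≤ N) :
    (Finset.univ.filter fun t : ZMod N => (t - i).val < ℓ).card = ℓ := by
  have key : (Finset.univ.filter fun t : ZMod N => (t - i).val < ℓ).card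
      = (Finset.univ.filter fun s : ZMod N => s.val < ℓ).card := by
    refine Finset.card_nbij' (fun t => t - i) (fun s => s + i) ?_ ?_ ?_ ?_
    · intro t ht; simp only [Finset.mem_coe, Finset.mem_filter, Finset.mem_univ, true_and] at ht ⊢; exact ht
    · intro s hs; simp only [Finset.mem_coe, Finset.mem_filter, Finset.mem_univ, true_and] at hs ⊢
      simpa using hs
    · intro t _; ring
    · intro s _; ring
  rw [key, card_val_lt hℓ]

lemma sum_cload (S : Finset (ZMod N × ZMod N)) :
    ∑ t : ZMod N, cload N S t = ∑ a ∈ S, (a.2 - a.1).val := by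
  have h1 : ∀ t, cload N S t = ∑ a ∈ S, if (t - a.1).val < (a.2 - a.1).val then 1 else 0 := by
    intro t; rw [cload, Finset.card_filter]
  simp only [h1]
  rw [Finset.sum_comm]
  apply Finset.sum_congr rfl
  intro a ha
  rw [← Finset.card_filter, card_shift_lt a.1 (le_of_lt (ZMod.val_lt _))]


variable (T : Finset (ZMod N × ZMod N))
  (hT1 : ∀ a ∈ T, a.1 ≠ a.2 ∧ 2 * (a.2 - a.1).val ≤ N)
  (hT2 : ∀ i j : ZMod N, i ≠ j → 2 * (j - i).val < N → (i, j) ∈ T)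
  (hT3 : ∀ i j : ZMod N, 2 * (j - i).val = N → ((i, j) ∈ T ↔ (j, i) ∉ T))

include hT1 hT2 hT3 in
lemma tourn_iff : ∀ i j : ZMod N, i ≠ j → ((i, j) ∈ T ↔ (j, i) ∉ T) := by
  intro i j hij
  have hd : (j - i) ≠ 0 := sub_ne_zero_of_ne (Ne.symm hij)
  have hv : (j - i).val + (i - j).val = N := by
    have := val_add_neg_val hd
    rwa [neg_sub] at this
  have hvpos : 0 < (j - i).val := by
    rcases Nat.eq_zero_or_pos (j - i).val with h | h
    · exact absurd ((ZMod.val_eq_zero _).mp h) hd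
    · exact h
  rcases lt_trichotomy (2 * (j - i).val) N with h | h | h
  · constructor
    · intro _ hji
      have := (hT1 _ hji).2
      simp only at this
      omega
    · intro _; exact hT2 i j hij h
  · exact hT3 i j h
  · have h2 : 2 * (i - j).val < N := by omega
    constructor
    · intro hij' _
      have := (hT1 _ hij').2
      simp only at this
      omega
    · intro hni
      exact absurd (hT2 j i (Ne.symm hij) h2) (by simpa using fun hji => hni hji)

include hT1 hT2 hT3 in
lemma two_card_T : 2 * T.card = N * N - N := by
  classical
  set D : Finset (ZMod N × ZMod N) := Finset.univ.filter (fun a => a.1 ≠ a.2) with hD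
  have hiff := tourn_iff T hT1 hT2 hT3
  have hTD : T ⊆ D := by
    intro a ha
    simp only [hD, Finset.mem_filter, Finset.mem_univ, true_and]
    exact (hT1 a ha).1
  have hswap : T.image Prod.swap = D \ T := by
    ext a
    simp only [Finset.mem_image, Finset.mem_sdiff, hD, Finset.mem_filter, Finset.mem_univ,
      true_and, Prod.ext_iff]
    constructor
    · rintro ⟨b, hb, h1, h2⟩
      obtain ⟨i, j⟩ := b
      subst h1; subst h2
      have h3 := (hT1 _ hb).1
      simp only at h3
      exact ⟨Ne.symm h3, ((hiff _ _ h3).mp hb)⟩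
    · rintro ⟨h1, h2⟩
      obtain ⟨i, j⟩ := a
      simp only at h1 h2 ⊢
      refine ⟨(j, i), ?_, rfl, rfl⟩
      exact not_not.mp (fun hn => h2 ((hiff i j h1).mpr hn))
  have hcard1 : (T.image Prod.swap).card = T.card :=
    Finset.card_image_of_injective _ Prod.swap_injective
  have hcard2 : (D \ T).card = D.card - T.card := Finset.card_sdiff_of_subset hTD
  have hTle : T.card ≤ D.card := Finset.card_le_card hTD
  have hDcard : D.card = N * N - N := by
    have h1 : Finset.univ.filter (fun a : ZMod N × ZMod N => a.1 = a.2)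
        = Finset.univ.image (fun i => (i, i)) := by
      ext a
      simp only [Finset.mem_filter, Finset.mem_univ, true_and, Finset.mem_image, Prod.ext_iff]
      constructor
      · intro h; exact ⟨a.1, ⟨rfl, h⟩⟩
      · rintro ⟨i, h1, h2⟩; simp [← h1, ← h2]
    have h2 : (Finset.univ.filter (fun a : ZMod N × ZMod N => a.1 = a.2)).card = N := by
      rw [h1, Finset.card_image_of_injective _ (fun i j h => (Prod.ext_iff.mp h).1),
        Finset.card_univ, ZMod.card]
    have h3 := Finset.card_filter_add_card_filter_not
      (s := (Finset.univ : Finset (ZMod N × ZMod N))) (p := fun a => a.1 = a.2)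
    have h4 : (Finset.univ : Finset (ZMod N × ZMod N)).card = N * N := by
      rw [Finset.card_univ]
      simp [ZMod.card]
    rw [← hD] at h3
    omega
  have hc3 : (T.image Prod.swap).card = (D \ T).card := by rw [hswap]
  omega


include hT1 hT2 hT3 in
lemma two_sum_len : 2 * (∑ a ∈ T, (a.2 - a.1).val)
    = N * ∑ ℓ ∈ Finset.range N, min ℓ (N - ℓ) := by
  classical
  set m : (ZMod N × ZMod N) → ℕ :=
    fun a => min (a.2 - a.1).val (a.1 - a.2).val with hm
  have hiff := tourn_iff T hT1 hT2 hT3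
  set D : Finset (ZMod N × ZMod N) := Finset.univ.filter (fun a => a.1 ≠ a.2) with hD
  have hTD : T ⊆ D := by
    intro a ha
    simp only [hD, Finset.mem_filter, Finset.mem_univ, true_and]
    exact (hT1 a ha).1
  have hswap : T.image Prod.swap = D \ T := by
    ext a
    simp only [Finset.mem_image, Finset.mem_sdiff, hD, Finset.mem_filter, Finset.mem_univ,
      true_and, Prod.ext_iff]
    constructor
    · rintro ⟨b, hb, h1, h2⟩
      obtain ⟨i, j⟩ := b
      subst h1; subst h2
      have h3 := (hT1 _ hb).1
      exact ⟨Ne.symm h3, ((hiff _ _ h3).mp hb)⟩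
    · rintro ⟨h1, h2⟩
      obtain ⟨i, j⟩ := a
      refine ⟨(j, i), ?_, rfl, rfl⟩
      exact not_not.mp (fun hn => h2 ((hiff i j h1).mpr hn))
  -- on T, the length equals m
  have hlen : ∀ a ∈ T, (a.2 - a.1).val = m a := by
    intro a ha
    obtain ⟨h1, h2⟩ := hT1 a ha
    have hd : (a.2 - a.1) ≠ 0 := sub_ne_zero_of_ne (Ne.symm h1)
    have hv : (a.2 - a.1).val + (a.1 - a.2).val = N := by
      have := val_add_neg_val hd
      rwa [neg_sub] at this
    simp only [hm]
    omega
  -- sum over D of m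
  have hDsum : ∑ a ∈ D, m a = 2 * ∑ a ∈ T, (a.2 - a.1).val := by
    have h1 : ∑ a ∈ D, m a = ∑ a ∈ T, m a + ∑ a ∈ D \ T, m a := by
      rw [← Finset.sum_sdiff hTD, add_comm]
    have h2 : ∑ a ∈ D \ T, m a = ∑ a ∈ T, m a := by
      rw [← hswap, Finset.sum_image (fun x _ y _ h => Prod.swap_injective h)]
      apply Finset.sum_congr rfl
      intro a _
      simp [hm, min_comm]
    rw [h1, h2]
    have h3 : ∑ a ∈ T, m a = ∑ a ∈ T, (a.2 - a.1).val :=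
      Finset.sum_congr rfl (fun a ha => (hlen a ha).symm)
    omega
  -- sum over univ of m
  have hUsum : ∑ a : ZMod N × ZMod N, m a = N * ∑ ℓ ∈ Finset.range N, min ℓ (N - ℓ) := by
    rw [Fintype.sum_prod_type]
    have hinner : ∀ i : ZMod N, ∑ j : ZMod N, m (i, j)
        = ∑ ℓ ∈ Finset.range N, min ℓ (N - ℓ) := by
      intro i
      have e1 : ∑ j : ZMod N, m (i, j) = ∑ d : ZMod N, min d.val (-d).val := by
        apply Fintype.sum_equiv (Equiv.subRight i)
        intro j
        simp [hm, Equiv.subRight, neg_sub]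
      rw [e1]
      have e2 : ∀ d : ZMod N, min d.val (-d).val = min d.val (N - d.val) := by
        intro d
        by_cases hd : d = 0
        · subst hd; simp
        · have := val_add_neg_val hd
          omega
      simp only [e2]
      exact sum_val_fun (N := N) (fun ℓ => min ℓ (N - ℓ))
    rw [Finset.sum_congr rfl (fun i _ => hinner i), Finset.sum_const, Finset.card_univ,
      ZMod.card, smul_eq_mul]
  -- diagonal terms vanish
  have hdiag : ∑ a ∈ Finset.univ.filter (fun a : ZMod N × ZMod N => ¬ a.1 ≠ a.2), m a = 0 := by
    apply Finset.sum_eq_zero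
    intro a ha
    simp only [Finset.mem_filter, not_not] at ha
    simp [hm, ha.2]
  have hsplit := Finset.sum_filter_add_sum_filter_not
    (Finset.univ : Finset (ZMod N × ZMod N)) (fun a => a.1 ≠ a.2) m
  rw [← hD] at hsplit
  omega


end
section
variable {N : ℕ} [NeZero N]

lemma val_sub' {x y : ZMod N} (h : y.val ≤ x.val) : (x - y).val = x.val - y.val := by
  have hx : ((x.val : ℕ) : ZMod N) = x := by rw [ZMod.natCast_val, ZMod.cast_id]
  have hy : ((y.val : ℕ) : ZMod N) = y := by rw [ZMod.natCast_val, ZMod.cast_id]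
  rw [← hx, ← hy, val_sub_of_le h (ZMod.val_lt x)]
  rw [hx, hy]

lemma val_sub_wrap {x y : ZMod N} (h : x.val < y.val) : (x - y).val = N - y.val + x.val := by
  have hx : ((x.val : ℕ) : ZMod N) = x := by rw [ZMod.natCast_val, ZMod.cast_id]
  have hy : ((y.val : ℕ) : ZMod N) = y := by rw [ZMod.natCast_val, ZMod.cast_id]
  rw [← hx, ← hy, val_sub_of_gt h (ZMod.val_lt y)]
  rw [hx, hy]

lemma overload {S : Finset (ZMod N × ZMod N)} (hload : ∀ t, cload N S t ≤ 2)
    (t : ZMod N) (a b c : ZMod N × ZMod N) (ha : a ∈ S) (hb : b ∈ S) (hc : c ∈ S)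
    (hab : a ≠ b) (hac : a ≠ c) (hbc : b ≠ c)
    (ca : (t - a.1).val < (a.2 - a.1).val)
    (cb : (t - b.1).val < (b.2 - b.1).val)
    (cc : (t - c.1).val < (c.2 - c.1).val) : False := by
  have h1 : 2 < cload N S t :=
    Finset.two_lt_card_iff.mpr ⟨a, b, c, Finset.mem_filter.mpr ⟨ha, ca⟩,
      Finset.mem_filter.mpr ⟨hb, cb⟩, Finset.mem_filter.mpr ⟨hc, cc⟩, hab, hac, hbc⟩
  exact absurd (hload t) (by omega)

set_option maxHeartbeats 2000000 in
lemma quad' (S : Finset (ZMod N × ZMod N))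
    (hnd : ∀ a ∈ S, a.1 ≠ a.2)
    (hanti : ∀ a ∈ S, (a.2, a.1) ∉ S)
    (hload : ∀ t, cload N S t ≤ 2)
    (hP4 : (verts N S).card = 4) (hS6 : S.card = 6) : False := by
  classical
  set P : Finset (ZMod N) := verts N S with hPdef
  have hφinj : Set.InjOn (fun a : ZMod N × ZMod N => ({a.1, a.2} : Finset (ZMod N))) ↑S := by
    intro a ha b hb he
    simp only at he
    rcases finset_pair_eq he with ⟨h1, h2⟩ | ⟨h1, h2⟩
    · exact Prod.ext h1 h2
    · exfalso
      apply hanti b (Finset.mem_coe.mp hb)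
      have h3 : (b.2, b.1) = a := Prod.ext h1.symm h2.symm
      rw [h3]
      exact Finset.mem_coe.mp ha
  have himg : S.image (fun a : ZMod N × ZMod N => ({a.1, a.2} : Finset (ZMod N)))
      = P.powersetCard 2 := by
    apply Finset.eq_of_subset_of_card_le
    · intro x hx
      obtain ⟨a, haS, rfl⟩ := Finset.mem_image.mp hx
      refine Finset.mem_powersetCard.mpr ⟨?_, Finset.card_pair (hnd a haS)⟩
      refine Finset.insert_subset (mem_verts_of_mem haS).1 ?_
      simpa using (mem_verts_of_mem haS).2
    · rw [Finset.card_powersetCard, hP4, Finset.card_image_of_injOn hφinj, hS6]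
      norm_num [Nat.choose]
  have hall : ∀ v ∈ P, ∀ w ∈ P, v ≠ w → (v, w) ∈ S ∨ (w, v) ∈ S := by
    intro v hv w hw hvw
    have hmem : ({v, w} : Finset (ZMod N)) ∈ S.image
        (fun a : ZMod N × ZMod N => ({a.1, a.2} : Finset (ZMod N))) := by
      rw [himg]
      refine Finset.mem_powersetCard.mpr ⟨?_, Finset.card_pair hvw⟩
      exact Finset.insert_subset hv (by simpa using hw)
    obtain ⟨a, haS, hpair⟩ := Finset.mem_image.mp hmem
    rcases finset_pair_eq hpair with ⟨h1, h2⟩ | ⟨h1, h2⟩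
    · left; rw [show (v, w) = a from Prod.ext h1.symm h2.symm]; exact haS
    · right; rw [show (w, v) = a from Prod.ext h1.symm h2.symm]; exact haS
  -- extract sorted values
  set Q : Finset ℕ := P.image ZMod.val with hQdef
  have hQ4 : Q.card = 4 := by
    rw [hQdef, Finset.card_image_of_injective _ (ZMod.val_injective N), hP4]
  set L : List ℕ := Q.sort (· ≤ ·) with hLdef
  have hlen : L.length = 4 := by rw [hLdef, Finset.length_sort, hQ4]
  obtain ⟨k0, k1, k2, k3, hL⟩ := length_eq_four.mp hlen
  have hsort : k0 < k1 ∧ k0 < k2 ∧ k0 < k3 ∧ k1 < k2 ∧ k1 < k3 ∧ k2 < k3 := by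
    have hss := List.sortedLT_iff_pairwise.mp (Finset.sortedLT_sort Q)
    rw [← hLdef, hL] at hss
    simp [List.pairwise_cons] at hss
    omega
  have hgetv : ∀ k ∈ L, ∃ v ∈ P, ZMod.val v = k := by
    intro k hk
    have : k ∈ Q := (Finset.mem_sort (α := ℕ) (· ≤ ·)).mp (hLdef ▸ hk)
    obtain ⟨v, hvP, hv⟩ := Finset.mem_image.mp (hQdef ▸ this)
    exact ⟨v, hvP, hv⟩
  obtain ⟨v0, hv0P, hval0⟩ := hgetv k0 (by rw [hL]; simp)
  obtain ⟨v1, hv1P, hval1⟩ := hgetv k1 (by rw [hL]; simp)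
  obtain ⟨v2, hv2P, hval2⟩ := hgetv k2 (by rw [hL]; simp)
  obtain ⟨v3, hv3P, hval3⟩ := hgetv k3 (by rw [hL]; simp)
  obtain ⟨h01, h02, h03, h12, h13, h23⟩ := hsort
  have hk0N : k0 < N := hval0 ▸ ZMod.val_lt v0
  have hk1N : k1 < N := hval1 ▸ ZMod.val_lt v1
  have hk2N : k2 < N := hval2 ▸ ZMod.val_lt v2
  have hk3N : k3 < N := hval3 ▸ ZMod.val_lt v3
  have hne01 : v0 ≠ v1 := by
    intro h
    rw [h, hval1] at hval0
    omega
  have hne02 : v0 ≠ v2 := by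
    intro h
    rw [h, hval2] at hval0
    omega
  have hne03 : v0 ≠ v3 := by
    intro h
    rw [h, hval3] at hval0
    omega
  have hne12 : v1 ≠ v2 := by
    intro h
    rw [h, hval2] at hval1
    omega
  have hne13 : v1 ≠ v3 := by
    intro h
    rw [h, hval3] at hval1
    omega
  have hne23 : v2 ≠ v3 := by
    intro h
    rw [h, hval3] at hval2
    omega
  have d01 : (v0 - v1).val = N - k1 + k0 := by
    rw [val_sub_wrap (by rw [hval0, hval1]; omega), hval0, hval1]
  have d02 : (v0 - v2).val = N - k2 + k0 := by
    rw [val_sub_wrap (by rw [hval0, hval2]; omega), hval0, hval2]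
  have d03 : (v0 - v3).val = N - k3 + k0 := by
    rw [val_sub_wrap (by rw [hval0, hval3]; omega), hval0, hval3]
  have d10 : (v1 - v0).val = k1 - k0 := by
    rw [val_sub' (by rw [hval1, hval0]; omega), hval1, hval0]
  have d12 : (v1 - v2).val = N - k2 + k1 := by
    rw [val_sub_wrap (by rw [hval1, hval2]; omega), hval1, hval2]
  have d13 : (v1 - v3).val = N - k3 + k1 := by
    rw [val_sub_wrap (by rw [hval1, hval3]; omega), hval1, hval3]
  have d20 : (v2 - v0).val = k2 - k0 := by
    rw [val_sub' (by rw [hval2, hval0]; omega), hval2, hval0]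
  have d21 : (v2 - v1).val = k2 - k1 := by
    rw [val_sub' (by rw [hval2, hval1]; omega), hval2, hval1]
  have d23 : (v2 - v3).val = N - k3 + k2 := by
    rw [val_sub_wrap (by rw [hval2, hval3]; omega), hval2, hval3]
  have d30 : (v3 - v0).val = k3 - k0 := by
    rw [val_sub' (by rw [hval3, hval0]; omega), hval3, hval0]
  have d31 : (v3 - v1).val = k3 - k1 := by
    rw [val_sub' (by rw [hval3, hval1]; omega), hval3, hval1]
  have d32 : (v3 - v2).val = k3 - k2 := by
    rw [val_sub' (by rw [hval3, hval2]; omega), hval3, hval2]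
  have e01 := hall v0 hv0P v1 hv1P hne01
  have e12 := hall v1 hv1P v2 hv2P hne12
  have e23 := hall v2 hv2P v3 hv3P hne23
  have e03 := hall v0 hv0P v3 hv3P hne03
  have e02 := hall v0 hv0P v2 hv2P hne02
  have e13 := hall v1 hv1P v3 hv3P hne13
  rcases e02 with x02 | x02 <;> rcases e13 with x13 | x13
  · rcases e01 with x01 | x01
    · rcases e12 with x12 | x12
      · exact overload hload v1 (v1, v2) (v0, v2) (v1, v3) x12 x02 x13
          (fun h => hne01.symm (congrArg Prod.fst h))
          (fun h => hne23 (congrArg Prod.snd h))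
          (fun h => hne01 (congrArg Prod.fst h))
          (by rw [sub_self, ZMod.val_zero, d21]; omega)
          (by rw [d10, d20]; omega)
          (by rw [sub_self, ZMod.val_zero, d31]; omega)
      · exact overload hload v0 (v0, v1) (v2, v1) (v0, v2) x01 x12 x02
          (fun h => hne02 (congrArg Prod.fst h))
          (fun h => hne12 (congrArg Prod.snd h))
          (fun h => hne02.symm (congrArg Prod.fst h))
          (by rw [sub_self, ZMod.val_zero, d10]; omega)
          (by rw [d02, d12]; omega)
          (by rw [sub_self, ZMod.val_zero, d20]; omega)
    · exact overload hload v1 (v1, v0) (v0, v2) (v1, v3) x01 x02 x13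
        (fun h => hne01.symm (congrArg Prod.fst h))
        (fun h => hne03 (congrArg Prod.snd h))
        (fun h => hne01 (congrArg Prod.fst h))
        (by rw [sub_self, ZMod.val_zero, d01]; omega)
        (by rw [d10, d20]; omega)
        (by rw [sub_self, ZMod.val_zero, d31]; omega)
  · rcases e01 with x01 | x01
    · exact overload hload v0 (v0, v1) (v0, v2) (v3, v1) x01 x02 x13
        (fun h => hne12 (congrArg Prod.snd h))
        (fun h => hne03 (congrArg Prod.fst h))
        (fun h => hne03 (congrArg Prod.fst h))
        (by rw [sub_self, ZMod.val_zero, d10]; omega)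
        (by rw [sub_self, ZMod.val_zero, d20]; omega)
        (by rw [d03, d13]; omega)
    · rcases e12 with x12 | x12
      · rcases e23 with x23 | x23
        · rcases e03 with x03 | x03
          · exact overload hload v0 (v0, v2) (v3, v1) (v0, v3) x02 x13 x03
              (fun h => hne03 (congrArg Prod.fst h))
              (fun h => hne23 (congrArg Prod.snd h))
              (fun h => hne03.symm (congrArg Prod.fst h))
              (by rw [sub_self, ZMod.val_zero, d20]; omega)
              (by rw [d03, d13]; omega)
              (by rw [sub_self, ZMod.val_zero, d30]; omega)
          · exact overload hload v3 (v1, v0) (v3, v0) (v3, v1) x01 x03 x13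
              (fun h => hne13 (congrArg Prod.fst h))
              (fun h => hne13 (congrArg Prod.fst h))
              (fun h => hne01 (congrArg Prod.snd h))
              (by rw [d31, d01]; omega)
              (by rw [sub_self, ZMod.val_zero, d03]; omega)
              (by rw [sub_self, ZMod.val_zero, d13]; omega)
        · exact overload hload v0 (v3, v2) (v0, v2) (v3, v1) x23 x02 x13
            (fun h => hne03.symm (congrArg Prod.fst h))
            (fun h => hne12.symm (congrArg Prod.snd h))
            (fun h => hne03 (congrArg Prod.fst h))
            (by rw [d03, d23]; omega)
            (by rw [sub_self, ZMod.val_zero, d20]; omega)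
            (by rw [d03, d13]; omega)
      · exact overload hload v0 (v2, v1) (v0, v2) (v3, v1) x12 x02 x13
          (fun h => hne02.symm (congrArg Prod.fst h))
          (fun h => hne23 (congrArg Prod.fst h))
          (fun h => hne03 (congrArg Prod.fst h))
          (by rw [d02, d12]; omega)
          (by rw [sub_self, ZMod.val_zero, d20]; omega)
          (by rw [d03, d13]; omega)
  · rcases e23 with x23 | x23
    · exact overload hload v2 (v2, v0) (v1, v3) (v2, v3) x02 x13 x23
        (fun h => hne12.symm (congrArg Prod.fst h))
        (fun h => hne03 (congrArg Prod.snd h))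
        (fun h => hne12 (congrArg Prod.fst h))
        (by rw [sub_self, ZMod.val_zero, d02]; omega)
        (by rw [d21, d31]; omega)
        (by rw [sub_self, ZMod.val_zero, d32]; omega)
    · rcases e01 with x01 | x01
      · rcases e12 with x12 | x12
        · rcases e03 with x03 | x03
          · exact overload hload v2 (v2, v0) (v1, v3) (v0, v3) x02 x13 x03
              (fun h => hne12.symm (congrArg Prod.fst h))
              (fun h => hne02.symm (congrArg Prod.fst h))
              (fun h => hne01.symm (congrArg Prod.fst h))
              (by rw [sub_self, ZMod.val_zero, d02]; omega)
              (by rw [d21, d31]; omega)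
              (by rw [d20, d30]; omega)
          · exact overload hload v3 (v3, v2) (v3, v0) (v2, v0) x23 x03 x02
              (fun h => hne02.symm (congrArg Prod.snd h))
              (fun h => hne23.symm (congrArg Prod.fst h))
              (fun h => hne23.symm (congrArg Prod.fst h))
              (by rw [sub_self, ZMod.val_zero, d23]; omega)
              (by rw [sub_self, ZMod.val_zero, d03]; omega)
              (by rw [d32, d02]; omega)
        · exact overload hload v2 (v2, v0) (v1, v3) (v2, v1) x02 x13 x12
            (fun h => hne12.symm (congrArg Prod.fst h))
            (fun h => hne01 (congrArg Prod.snd h))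
            (fun h => hne12 (congrArg Prod.fst h))
            (by rw [sub_self, ZMod.val_zero, d02]; omega)
            (by rw [d21, d31]; omega)
            (by rw [sub_self, ZMod.val_zero, d12]; omega)
      · exact overload hload v2 (v2, v0) (v1, v3) (v1, v0) x02 x13 x01
          (fun h => hne12.symm (congrArg Prod.fst h))
          (fun h => hne12.symm (congrArg Prod.fst h))
          (fun h => hne03.symm (congrArg Prod.snd h))
          (by rw [sub_self, ZMod.val_zero, d02]; omega)
          (by rw [d21, d31]; omega)
          (by rw [d21, d01]; omega)
  · rcases e23 with x23 | x23
    · rcases e03 with x03 | x03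
      · exact overload hload v2 (v2, v3) (v2, v0) (v0, v3) x23 x02 x03
          (fun h => hne03.symm (congrArg Prod.snd h))
          (fun h => hne02.symm (congrArg Prod.fst h))
          (fun h => hne02.symm (congrArg Prod.fst h))
          (by rw [sub_self, ZMod.val_zero, d32]; omega)
          (by rw [sub_self, ZMod.val_zero, d02]; omega)
          (by rw [d20, d30]; omega)
      · exact overload hload v3 (v2, v0) (v3, v1) (v3, v0) x02 x13 x03
          (fun h => hne23 (congrArg Prod.fst h))
          (fun h => hne23 (congrArg Prod.fst h))
          (fun h => hne01.symm (congrArg Prod.snd h))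
          (by rw [d32, d02]; omega)
          (by rw [sub_self, ZMod.val_zero, d13]; omega)
          (by rw [sub_self, ZMod.val_zero, d03]; omega)
    · exact overload hload v3 (v3, v2) (v2, v0) (v3, v1) x23 x02 x13
        (fun h => hne23.symm (congrArg Prod.fst h))
        (fun h => hne12.symm (congrArg Prod.snd h))
        (fun h => hne23 (congrArg Prod.fst h))
        (by rw [sub_self, ZMod.val_zero, d23]; omega)
        (by rw [d32, d02]; omega)
        (by rw [sub_self, ZMod.val_zero, d13]; omega)

end

section
variable {N : ℕ} [NeZero N]

lemma val_sub_pos {a : ZMod N × ZMod N} (h : a.1 ≠ a.2) : 0 < (a.2 - a.1).val := by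
  have hd : (a.2 - a.1) ≠ 0 := sub_ne_zero_of_ne (Ne.symm h)
  rcases Nat.eq_zero_or_pos (a.2 - a.1).val with h0 | h0
  · exact absurd ((ZMod.val_eq_zero _).mp h0) hd
  · exact h0

lemma key_bound (S : Finset (ZMod N × ZMod N)) (hS : S.Nonempty)
    (hnd : ∀ a ∈ S, a.1 ≠ a.2)
    (hanti : ∀ a ∈ S, (a.2, a.1) ∉ S)
    (hload : ∀ t, cload N S t ≤ 2) :
    2 * S.card + 6 ≤ 4 * (verts N S).card := by
  classical
  set P : Finset (ZMod N) := verts N S with hP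
  set g : (ZMod N × ZMod N) → ℕ :=
    fun a => (P.filter fun v => (v - a.1).val < (a.2 - a.1).val).card with hg
  have hg_sum : ∑ a ∈ S, g a = ∑ v ∈ P, cload N S v := by
    have h1 : ∀ a, g a = ∑ v ∈ P, if (v - a.1).val < (a.2 - a.1).val then 1 else 0 := by
      intro a; rw [hg]; exact Finset.card_filter _ _
    have h2 : ∀ v, cload N S v = ∑ a ∈ S, if (v - a.1).val < (a.2 - a.1).val then 1 else 0 := by
      intro v; rw [cload]; exact Finset.card_filter _ _
    simp only [h1, h2]
    exact Finset.sum_comm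
  have hg_le : ∑ a ∈ S, g a ≤ 2 * P.card := by
    rw [hg_sum]
    calc ∑ v ∈ P, cload N S v ≤ ∑ v ∈ P, 2 := Finset.sum_le_sum (fun v _ => hload v)
    _ = 2 * P.card := by rw [Finset.sum_const, smul_eq_mul, mul_comm]
  have hg1 : ∀ a ∈ S, 1 ≤ g a := by
    intro a ha
    apply Finset.card_pos.mpr
    refine ⟨a.1, Finset.mem_filter.mpr ⟨(mem_verts_of_mem ha).1, ?_⟩⟩
    rw [sub_self, ZMod.val_zero]
    exact val_sub_pos (hnd a ha)
  have gtwo : ∀ a ∈ S, ∀ b ∈ S, a.1 = b.1 → (a.2 - a.1).val < (b.2 - b.1).val → 2 ≤ g b := by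
    intro a ha b hb he hlt
    have h1 : b.1 ∈ P.filter fun v => (v - b.1).val < (b.2 - b.1).val := by
      refine Finset.mem_filter.mpr ⟨(mem_verts_of_mem hb).1, ?_⟩
      rw [sub_self, ZMod.val_zero]
      exact val_sub_pos (hnd b hb)
    have h2 : a.2 ∈ P.filter fun v => (v - b.1).val < (b.2 - b.1).val := by
      refine Finset.mem_filter.mpr ⟨(mem_verts_of_mem ha).2, ?_⟩
      have h4 : a.2 - b.1 = a.2 - a.1 := by rw [he]
      rw [h4]
      exact hlt
    have h3 : b.1 ≠ a.2 := by rw [← he]; exact hnd a ha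
    exact Finset.one_lt_card.mpr ⟨b.1, h1, a.2, h2, h3⟩
  set K : Finset (ZMod N × ZMod N) := S.filter (fun a => g a = 1) with hK
  have hKcard : K.card ≤ P.card := by
    apply Finset.card_le_card_of_injOn Prod.fst
    · intro a ha
      exact (mem_verts_of_mem (Finset.mem_filter.mp ha).1).1
    · intro a ha b hb he
      obtain ⟨haS, hga⟩ := Finset.mem_filter.mp (Finset.mem_coe.mp ha)
      obtain ⟨hbS, hgb⟩ := Finset.mem_filter.mp (Finset.mem_coe.mp hb)
      by_contra hne
      have hne2 : a.2 ≠ b.2 := fun h2 => hne (Prod.ext he h2)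
      have hvne : (a.2 - a.1).val ≠ (b.2 - b.1).val := by
        intro hv
        apply hne2
        have : a.2 - a.1 = b.2 - b.1 := ZMod.val_injective N hv
        have := congrArg (· + a.1) this
        simpa [he, sub_add_cancel] using this
      rcases lt_or_gt_of_ne hvne with h | h
      · have := gtwo a haS b hbS he h
        omega
      · have := gtwo b hbS a haS he.symm h
        omega
  have hsplit : ∑ a ∈ K, g a + ∑ a ∈ S \ K, g a = ∑ a ∈ S, g a := by
    rw [add_comm]; exact Finset.sum_sdiff (Finset.filter_subset _ _)
  have hKsum : ∑ a ∈ K, g a = K.card := by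
    rw [Finset.sum_congr rfl (fun a ha => (Finset.mem_filter.mp ha).2), Finset.sum_const,
      smul_eq_mul, mul_one]
  have hSK : 2 * (S.card - K.card) ≤ ∑ a ∈ S \ K, g a := by
    have h1 : ∀ a ∈ S \ K, 2 ≤ g a := by
      intro a ha
      obtain ⟨haS, haK⟩ := Finset.mem_sdiff.mp ha
      have h2 := hg1 a haS
      have h3 : g a ≠ 1 := fun h => haK (Finset.mem_filter.mpr ⟨haS, h⟩)
      omega
    have := Finset.card_nsmul_le_sum (S \ K) g 2 h1
    rwa [smul_eq_mul, Finset.card_sdiff_of_subset (Finset.filter_subset _ _), mul_comm] at this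
  have hKS : K.card ≤ S.card := Finset.card_le_card (Finset.filter_subset _ _)
  have master : 2 * S.card ≤ 2 * P.card + K.card := by omega
  have hp2 : 2 ≤ P.card := by
    obtain ⟨a, ha⟩ := hS
    exact Finset.one_lt_card.mpr ⟨a.1, (mem_verts_of_mem ha).1, a.2, (mem_verts_of_mem ha).2,
      hnd a ha⟩
  have hφinj : Set.InjOn (fun a : ZMod N × ZMod N => ({a.1, a.2} : Finset (ZMod N))) ↑S := by
    intro a ha b hb he
    simp only at he
    rcases finset_pair_eq he with ⟨h1, h2⟩ | ⟨h1, h2⟩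
    · exact Prod.ext h1 h2
    · exfalso
      apply hanti b (Finset.mem_coe.mp hb)
      have : (b.2, b.1) = a := Prod.ext h1.symm h2.symm
      rw [this]
      exact Finset.mem_coe.mp ha
  have hchoose : S.card ≤ Nat.choose P.card 2 := by
    have h1 : ∀ a ∈ S, ({a.1, a.2} : Finset (ZMod N)) ∈ P.powersetCard 2 := by
      intro a ha
      refine Finset.mem_powersetCard.mpr ⟨?_, Finset.card_pair (hnd a ha)⟩
      refine Finset.insert_subset (mem_verts_of_mem ha).1 ?_
      simpa using (mem_verts_of_mem ha).2
    have := Finset.card_le_card_of_injOn _ h1 hφinj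
    rwa [Finset.card_powersetCard] at this
  by_cases h6 : 6 ≤ P.card
  · omega
  · set p : ℕ := P.card with hp
    clear_value p
    interval_cases p
    · norm_num [Nat.choose] at hchoose; omega
    · norm_num [Nat.choose] at hchoose; omega
    · -- p = 4
      norm_num [Nat.choose] at hchoose
      by_contra hcon
      have hS6 : S.card = 6 := by omega
      exact quad' S hnd hanti hload hp.symm hS6
    · omega

end


theorem stmt_11 (N W : ℕ) (hN : 2 ≤ N)
    -- `T` is the tournament of requests: all shortest clockwise arcs, with exactly one
    -- arc chosen per diametrical pair when `N` is even.
    (T : Finset (ZMod N × ZMod N))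
    (hT1 : ∀ a ∈ T, a.1 ≠ a.2 ∧ 2 * (a.2 - a.1).val ≤ N)
    (hT2 : ∀ i j : ZMod N, i ≠ j → 2 * (j - i).val < N → (i, j) ∈ T)
    (hT3 : ∀ i j : ZMod N, 2 * (j - i).val = N → ((i, j) ∈ T ↔ (j, i) ∉ T))
    -- a valid partition of the requests into `W` nonempty parts, each of load at most 2
    (B : Fin W → Finset (ZMod N × ZMod N))
    (hne : ∀ w, (B w).Nonempty)
    (hdisj : ∀ w w', w ≠ w' → Disjoint (B w) (B w'))
    (hcover : ∀ a : ZMod N × ZMod N, a ∈ T ↔ ∃ w, a ∈ B w)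
    (hload : ∀ w, ∀ t : ZMod N, cload N (B w) t ≤ 2) :
    4 * (∑ w : Fin W, (verts N (B w)).card) ≥ 6 * W + N * (N - 1) ∧
      ⌈(11 * (N : ℚ) ^ 2 - 8 * (N : ℚ) - 3) / 32⌉
        ≤ ((∑ w : Fin W, (verts N (B w)).card : ℕ) : ℤ) := by
  haveI : NeZero N := ⟨by omega⟩
  classical
  set A : ℕ := ∑ w : Fin W, (verts N (B w)).card with hA
  have hBsub : ∀ w, B w ⊆ T := fun w a ha => (hcover a).mpr ⟨w, ha⟩
  have hTB : T = Finset.univ.biUnion B := by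
    ext a
    simp only [Finset.mem_biUnion, Finset.mem_univ, true_and]
    exact hcover a
  have hdisj' : ∀ w ∈ (Finset.univ : Finset (Fin W)), ∀ w' ∈ (Finset.univ : Finset (Fin W)),
      w ≠ w' → Disjoint (B w) (B w') := fun w _ w' _ h => hdisj w w' h
  have hcardT : ∑ w : Fin W, (B w).card = T.card := by
    rw [hTB, Finset.card_biUnion hdisj']
  have hiff := tourn_iff T hT1 hT2 hT3
  -- per-part inequality
  have hkey : ∀ w : Fin W, 2 * (B w).card + 6 ≤ 4 * (verts N (B w)).card := by
    intro w
    apply key_bound (B w) (hne w)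
    · intro a ha
      exact (hT1 a (hBsub w ha)).1
    · intro a ha hrev
      have h1 : a ∈ T := hBsub w ha
      have h2 : (a.2, a.1) ∈ T := hBsub w hrev
      have h3 : a.1 ≠ a.2 := (hT1 a h1).1
      exact (hiff a.1 a.2 h3).mp (by rwa [← Prod.mk.eta (p := a)] at h1) h2
    · exact hload w
  -- first conjunct, in product form
  have h2T : 2 * T.card = N * N - N := two_card_T T hT1 hT2 hT3
  have hNle : N ≤ N * N := Nat.le_mul_of_pos_left N (by omega)
  have hNN : N * (N - 1) = N * N - N := by
    rw [Nat.mul_sub, mul_one]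
  have hsum1 : ∑ w : Fin W, (2 * (B w).card + 6) ≤ ∑ w : Fin W, 4 * (verts N (B w)).card :=
    Finset.sum_le_sum (fun w _ => hkey w)
  have hsum2 : ∑ w : Fin W, (2 * (B w).card + 6) = 2 * T.card + 6 * W := by
    rw [Finset.sum_add_distrib, Finset.sum_const, ← Finset.mul_sum, hcardT]
    simp [mul_comm]
  have hsum3 : ∑ w : Fin W, 4 * (verts N (B w)).card = 4 * A := by
    rw [hA, Finset.mul_sum]
  have hfirst : 6 * W + N * N - N ≤ 4 * A := by omega
  -- load bound : N * N ≤ 16 * W + 1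
  have hcload_T : ∀ t : ZMod N, cload N T t ≤ 2 * W := by
    intro t
    have h1 : cload N T t = ∑ w : Fin W, cload N (B w) t := by
      rw [cload, hTB, Finset.filter_biUnion, Finset.card_biUnion]
      · rfl
      · intro w _ w' _ hww
        exact Finset.disjoint_filter_filter (hdisj w w' hww)
    rw [h1]
    calc ∑ w : Fin W, cload N (B w) t ≤ ∑ w : Fin W, 2 :=
        Finset.sum_le_sum (fun w _ => hload w t)
    _ = 2 * W := by simp [mul_comm]
  have hsum_load : ∑ t : ZMod N, cload N T t ≤ N * (2 * W) := by
    calc ∑ t : ZMod N, cload N T t ≤ ∑ _t : ZMod N, 2 * W :=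
        Finset.sum_le_sum (fun t _ => hcload_T t)
    _ = N * (2 * W) := by
        rw [Finset.sum_const, Finset.card_univ, ZMod.card, smul_eq_mul]
  have hlen_sum := sum_cload T
  have h2len := two_sum_len T hT1 hT2 hT3
  have hx : ∑ a ∈ T, (a.2 - a.1).val ≤ N * (2 * W) := by
    rw [← hlen_sum]; exact hsum_load
  have hfN : N * ∑ ℓ ∈ Finset.range N, min ℓ (N - ℓ) ≤ N * (4 * W) := by
    rw [← h2len]
    calc 2 * ∑ a ∈ T, (a.2 - a.1).val ≤ 2 * (N * (2 * W)) := by omega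
    _ = N * (4 * W) := by ring
  have hf4W : ∑ ℓ ∈ Finset.range N, min ℓ (N - ℓ) ≤ 4 * W :=
    Nat.le_of_mul_le_mul_left hfN (by omega)
  have hWbound : N * N ≤ 16 * W + 1 := by
    have := fbound N
    rw [pow_two] at this
    omega
  constructor
  · rw [ge_iff_le, hNN]
    omega
  · have hZ : 11 * (N * N) ≤ 32 * A + 8 * N + 3 := by omega
    rw [Int.ceil_le]
    rw [div_le_iff₀ (by norm_num : (0:ℚ) < 32)]
    have hQ : (11 * (N * N) : ℚ) ≤ 32 * (A : ℚ) + 8 * (N : ℚ) + 3 := by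
      exact_mod_cast hZ
    push_cast
    nlinarith [hQ]
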